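/- Let d₂ > 0 be a real number and define r₁(λ) = (1/4)λ² and r₂(λ) = −1/2 − (1/(2d₂))λ. Then for real numbers t₁, t₂ there exist c > 0 and λ > 0 with r₁(λ) = c·t₁ and r₂(λ) = c·t₂ if and only if t₁ > 0 and t₂ < 0; moreover in that case the constant c is unique and equals (−(d₂²t₂ − t₁) + √(t₁² − 2d₂²t₁t₂))/(2d₂²t₂²). -/

import Mathlib

theorem stmt_9 (d₂ : ℝ) (hd₂ : 0 < d₂)
    (r₁ r₂ : ℝ → ℝ)
    (hr₁ : ∀ l : ℝ, r₁ l = (1/4)*l^2)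
    (hr₂ : ∀ l : ℝ, r₂ l = -1/2 - (1/(2*d₂))*l)
    (t₁ t₂ : ℝ) :
    ((∃ c l : ℝ, 0 < c ∧ 0 < l ∧ r₁ l = c * t₁ ∧ r₂ l = c * t₂) ↔
      (0 < t₁ ∧ t₂ < 0)) ∧
    (∀ c l : ℝ, 0 < c → 0 < l → r₁ l = c * t₁ → r₂ l = c * t₂ →
      c = (-(d₂^2*t₂ - t₁) + Real.sqrt (t₁^2 - 2*d₂^2*t₁*t₂))/(2*d₂^2*t₂^2)) := by
  have hd₂' : d₂ ≠ 0 := hd₂.ne'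
  constructor
  · constructor
    · rintro ⟨c, l, hc, hl, h1, h2⟩
      rw [hr₁ l] at h1
      rw [hr₂ l] at h2
      have hlo : 0 < 1/(2*d₂)*l := by positivity
      have hct₂ : c*t₂ < -1/2 := by linarith
      constructor
      · nlinarith
      · nlinarith
    · rintro ⟨ht₁, ht₂⟩
      set S := Real.sqrt (t₁^2 - 2*d₂^2*t₁*t₂) with hSdef
      have hSnn : 0 ≤ S := Real.sqrt_nonneg _
      have hS2 : S^2 = t₁^2 - 2*d₂^2*t₁*t₂ := Real.sq_sqrt (by
        nlinarith [sq_nonneg t₁, mul_pos (mul_pos (mul_pos hd₂ hd₂) ht₁) (neg_pos.mpr ht₂)])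
      have hden : 0 < -(d₂*t₂) := by nlinarith
      set l := (t₁ + S)/(-(d₂*t₂)) with hldef
      have hlpos : 0 < l := div_pos (by linarith) hden
      have hdt : d₂ * t₂ ≠ 0 := mul_ne_zero hd₂' ht₂.ne
      have hlm : -(d₂*t₂) * l = t₁ + S := by
        rw [hldef]; field_simp; exact div_self ht₂.ne
      have hSeq : S = -(d₂*t₂)*l - t₁ := by linarith
      have hq : d₂*t₂*l^2 + 2*t₁*l + 2*d₂*t₁ = 0 := by
        have hS2' : (-(d₂*t₂)*l - t₁)^2 = t₁^2 - 2*d₂^2*t₁*t₂ := by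
          rw [← hSeq]; exact hS2
        have hfac : (d₂*t₂) * (d₂*t₂*l^2 + 2*t₁*l + 2*d₂*t₁) = 0 := by
          nlinarith [hS2']
        rcases mul_eq_zero.mp hfac with h | h
        · exfalso; nlinarith
        · exact h
      refine ⟨l^2/(4*t₁), l, by positivity, hlpos, ?_, ?_⟩
      · rw [hr₁]; field_simp
      · rw [hr₂]
        have ht₁' : t₁ ≠ 0 := ht₁.ne'
        field_simp
        nlinarith [hq]
  · intro c l hc hl h1 h2
    rw [hr₁ l] at h1
    rw [hr₂ l] at h2
    have hl2 : l = -d₂ - 2*d₂*c*t₂ := by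
      field_simp at h2
      nlinarith [h2]
    have ht₁pos : 0 < t₁ := by nlinarith
    have hlo : 0 < 1/(2*d₂)*l := by positivity
    have hct₂ : 2*c*t₂ < -1 := by linarith
    set X := 2*d₂^2*t₂^2*c + d₂^2*t₂ - t₁ with hXdef
    have hXnn : 0 ≤ X := by
      have hpos : 0 < (-(2*c*t₂)-1) * (-(2*c*t₂)+1) := by nlinarith
      nlinarith [h1, hl2, sq_nonneg l]
    have hX2 : X^2 = t₁^2 - 2*d₂^2*t₁*t₂ := by
      have hrel : (d₂ + 2*d₂*c*t₂)^2 = 4*c*t₁ := by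
        linear_combination (d₂ + 2*d₂*c*t₂ - l)*hl2 + 4*h1
      linear_combination (d₂^2*t₂^2) * hrel
    have hsqrt : Real.sqrt (t₁^2 - 2*d₂^2*t₁*t₂) = X := by
      rw [← hX2, Real.sqrt_sq hXnn]
    rw [hsqrt, hXdef]
    have ht₂ne : t₂ ≠ 0 := by
      intro h; rw [h] at hct₂; linarith
    field_simp
    ring
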